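/- Let R be a Noetherian commutative ring of prime characteristic p, let e ≥ 1, let φ : F^e_* R → R be a surjective R-linear map, and let a ⊆ R be any ideal. For t ≥ 0 let φ^t(F^{te}_* a) denote the ideal {φ^t(F^{te}_* x) : x ∈ a} of R (which is an ideal of R since a is an ideal). Then: (i) a ⊆ φ(F^e_* a); (ii) the ascending chain a ⊆ φ(F^e_* a) ⊆ φ^2(F^{2e}_* a) ⊆ ⋯ stabilizes at some ideal C; and (iii) C is the unique smallest φ-compatible ideal of R containing a, i.e., φ(F^e_* C) ⊆ C, a ⊆ C, and C ⊆ J for every φ-compatible ideal J containing a. -/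

import Mathlib

/-- For surjective `φ : F^e_* R → R` and any ideal `a`, the chain
`a ⊆ φ(a) ⊆ φ²(a) ⊆ ⋯` ascends and stabilizes at the smallest
`φ`-compatible ideal containing `a`. -/
theorem stmt_5 {R : Type*} [CommRing R] [IsNoetherianRing R]
    (p : ℕ) (hp : p.Prime) [CharP R p]
    (e : ℕ) (he : 1 ≤ e)
    (φ : R → R)
    (hadd : ∀ x y : R, φ (x + y) = φ x + φ y)
    (hlin : ∀ r x : R, φ (r ^ p ^ e * x) = r * φ x)
    (hsurj : Function.Surjective φ)
    (a : Ideal R) :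
    (a : Set R) ⊆ φ '' (a : Set R) ∧
    (∀ t : ℕ, φ^[t] '' (a : Set R) ⊆ φ^[t + 1] '' (a : Set R)) ∧
    ∃ (C : Ideal R) (t₀ : ℕ),
      (∀ t : ℕ, t₀ ≤ t → φ^[t] '' (a : Set R) = (C : Set R)) ∧
      (∀ x ∈ C, φ x ∈ C) ∧
      a ≤ C ∧
      (∀ J : Ideal R, (∀ x ∈ J, φ x ∈ J) → a ≤ J → C ≤ J) := by
  have h0 : φ 0 = 0 := by
    have h := hadd 0 0
    rw [add_zero] at h
    exact (left_eq_add.mp h)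
  -- (i)
  obtain ⟨u, hu⟩ := hsurj 1
  have hsub : (a : Set R) ⊆ φ '' (a : Set R) := by
    intro x hx
    refine ⟨x ^ p ^ e * u, ?_, ?_⟩
    · exact Ideal.mul_mem_right u a (Ideal.pow_mem_of_mem a hx _ (pow_pos hp.pos e))
    · rw [hlin, hu, mul_one]
  -- (ii)
  have hchain : ∀ t : ℕ, φ^[t] '' (a : Set R) ⊆ φ^[t + 1] '' (a : Set R) := by
    intro t
    rw [Function.iterate_succ, Set.image_comp]
    exact Set.image_mono hsub
  have hbase : ∀ t : ℕ, (a : Set R) ⊆ φ^[t] '' (a : Set R) := by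
    intro t
    induction t with
    | zero => simp
    | succ n ih => exact ih.trans (hchain n)
  -- image of an ideal is an ideal
  have imgIdeal : ∀ I : Ideal R, ∃ I' : Ideal R, (I' : Set R) = φ '' (I : Set R) := by
    intro I
    refine ⟨{ carrier := φ '' (I : Set R), add_mem' := ?_, zero_mem' := ?_,
              smul_mem' := ?_ }, rfl⟩
    · rintro x y ⟨v, hv, rfl⟩ ⟨w, hw, rfl⟩
      exact ⟨v + w, I.add_mem hv hw, hadd v w⟩
    · exact ⟨0, I.zero_mem, h0⟩
    · rintro r x ⟨v, hv, rfl⟩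
      refine ⟨r ^ p ^ e * v, I.mul_mem_left _ hv, ?_⟩
      simpa [smul_eq_mul] using hlin r v
  have hIt : ∀ t : ℕ, ∃ I : Ideal R, (I : Set R) = φ^[t] '' (a : Set R) := by
    intro t
    induction t with
    | zero => exact ⟨a, by simp⟩
    | succ n ih =>
      obtain ⟨I, hI⟩ := ih
      obtain ⟨I', hI'⟩ := imgIdeal I
      refine ⟨I', ?_⟩
      rw [hI', hI, Function.iterate_succ', Set.image_comp]
  let It : ℕ → Ideal R := fun t => (hIt t).choose
  have hItc : ∀ t, (It t : Set R) = φ^[t] '' (a : Set R) := fun t => (hIt t).choose_spec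
  have hmono : Monotone It := by
    apply monotone_nat_of_le_succ
    intro n
    rw [← SetLike.coe_subset_coe, hItc, hItc]
    exact hchain n
  obtain ⟨t₀, hstab0⟩ := monotone_stabilizes_iff_noetherian.mpr inferInstance (⟨It, hmono⟩ : ℕ →o Ideal R)
  have hstab : ∀ m, t₀ ≤ m → It t₀ = It m := hstab0
  refine ⟨hsub, hchain, It t₀, t₀, ?_, ?_, ?_, ?_⟩
  · intro t ht
    rw [← hItc t, ← hstab t ht]
  · intro x hx
    have hx' : x ∈ φ^[t₀] '' (a : Set R) := by rw [← hItc]; exact hx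
    have : φ x ∈ φ^[t₀ + 1] '' (a : Set R) := by
      rw [Function.iterate_succ', Set.image_comp]
      exact ⟨x, hx', rfl⟩
    rw [← hItc, ← hstab (t₀ + 1) (Nat.le_succ t₀)] at this
    exact this
  · intro x hx
    rw [← SetLike.mem_coe, hItc]
    exact hbase t₀ hx
  · intro J hJ haJ
    have key : ∀ t, φ^[t] '' (a : Set R) ⊆ (J : Set R) := by
      intro t
      induction t with
      | zero => simpa using haJ
      | succ n ih =>
        rw [Function.iterate_succ', Set.image_comp]
        rintro _ ⟨y, hy, rfl⟩
        exact hJ y (ih hy)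
    intro x hx
    have : x ∈ φ^[t₀] '' (a : Set R) := by rw [← hItc]; exact hx
    exact key t₀ this
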